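/- arXiv:math/0611691 — 2 statements merged into one kernel-verified Lean document; each statement's English description precedes it below -/
import Mathlib

section
/- Let C ≥ 2 be an integer and let λ_1 > λ_2 > ... > λ_{C-1} > 0 be given constants. Let ν = (ν_1, ..., ν_{C-1}) ∈ ℝ^{C-1} be such that ν_q > 0 for at least one index q ∈ {1, ..., C-1}. Then there exist vectors p_1 = (p_{11}, ..., p_{1C}) and p_2 = (p_{21}, ..., p_{2C}) with all entries strictly positive, Σ_{j=1}^C p_{1j} = 1 and Σ_{j=1}^C p_{2j} = 1, such that ν_j = log(p_{1j} p_{2C} / (p_{1C} p_{2j})) for every j = 1, ..., C-1, and Δ_r(p_1, p_2) ≥ 0 for every r = 1, ..., C-1. (Existence part of Lemma 2.1.) -/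
/-- `Δ_r(p₁,p₂) = λ_r Σ_{j=1}^r (p₁ⱼ - p₂ⱼ) + Σ_{j=r+1}^{C-1} λⱼ (p₁ⱼ - p₂ⱼ)`. -/
def Delta (C : ℕ) (lam p1 p2 : ℕ → ℝ) (r : ℕ) : ℝ :=
  lam r * ∑ j ∈ Finset.Icc 1 r, (p1 j - p2 j)
    + ∑ j ∈ Finset.Icc (r + 1) (C - 1), lam j * (p1 j - p2 j)

set_option maxHeartbeats 2000000 in
/-- Existence part of Lemma 2.1: if some `ν_q > 0`, there are positive probability
vectors `p₁, p₂` realizing the log odds ratios `ν` and satisfying all ICX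
inequalities `Δ_r ≥ 0`. -/
theorem lemma21_existence (C : ℕ) (hC : 2 ≤ C) (lam : ℕ → ℝ)
    (hanti : StrictAntiOn lam (Set.Icc 1 (C - 1))) (hpos : 0 < lam (C - 1))
    (ν : ℕ → ℝ) (hq : ∃ q ∈ Finset.Icc 1 (C - 1), 0 < ν q) :
    ∃ p1 p2 : ℕ → ℝ,
      (∀ j ∈ Finset.Icc 1 C, 0 < p1 j) ∧
      (∀ j ∈ Finset.Icc 1 C, 0 < p2 j) ∧
      (∑ j ∈ Finset.Icc 1 C, p1 j = 1) ∧
      (∑ j ∈ Finset.Icc 1 C, p2 j = 1) ∧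
      (∀ j ∈ Finset.Icc 1 (C - 1),
        ν j = Real.log (p1 j * p2 C / (p1 C * p2 j))) ∧
      (∀ r ∈ Finset.Icc 1 (C - 1), 0 ≤ Delta C lam p1 p2 r) := by
  obtain ⟨q, hqmem, hνq⟩ := hq
  obtain ⟨n, rfl⟩ : ∃ n, C = n + 1 := ⟨C - 1, by omega⟩
  simp only [Nat.add_sub_cancel] at hanti hpos hqmem ⊢
  have hn : 1 ≤ n := by omega
  rw [Finset.mem_Icc] at hqmem
  obtain ⟨hq1, hqn⟩ := hqmem
  have hqC : q ≠ n + 1 := by omega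
  have hlam : ∀ k, 1 ≤ k → k ≤ n → 0 < lam k ∧ lam n ≤ lam k ∧ lam k ≤ lam 1 := by
    intro k hk1 hkn
    have h1 : lam n ≤ lam k := by
      rcases eq_or_lt_of_le hkn with h | h
      · rw [h]
      · exact (hanti ⟨hk1, hkn⟩ ⟨hn, le_refl n⟩ h).le
    have h2 : lam k ≤ lam 1 := by
      rcases eq_or_lt_of_le hk1 with h | h
      · rw [← h]
      · exact (hanti ⟨le_refl 1, hn⟩ ⟨hk1, hkn⟩ h).le
    exact ⟨lt_of_lt_of_le hpos h1, h1, h2⟩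
  set E : ℕ → ℝ := fun j => Real.exp (ν j) with hE
  have hEpos : ∀ j, 0 < E j := fun j => Real.exp_pos _
  have hEq : 1 < E q := by
    rw [hE]; exact Real.one_lt_exp_iff.mpr hνq
  have hEq1 : 0 < E q - 1 := by linarith
  clear_value E
  set Jq := (Finset.Icc 1 n).erase q with hJq
  set A : ℝ := ∑ j ∈ Jq, E j with hA
  have hA0 : 0 ≤ A := Finset.sum_nonneg fun j _ => (hEpos j).le
  clear_value A
  set c2 : ℝ := (n : ℝ) - 1 with hc2
  have hc20 : 0 ≤ c2 := by
    have : (1:ℝ) ≤ (n:ℝ) := by exact_mod_cast hn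
    rw [hc2]; linarith
  clear_value c2
  have hcardJq : Jq.card = n - 1 := by
    rw [hJq, Finset.card_erase_of_mem (Finset.mem_Icc.mpr ⟨hq1, hqn⟩), Nat.card_Icc]
    omega
  have hcard : (Jq.card : ℝ) = c2 := by
    rw [hcardJq, hc2, Nat.cast_sub hn, Nat.cast_one]
  set lmin := lam n with hlmin
  set lmax := lam 1 with hlmax
  have hlmax0 : 0 < lmax := (hlam 1 le_rfl hn).1
  set M : ℝ := E q + A + 1 with hM
  have hM0 : 0 < M := by have := hEpos q; rw [hM]; linarith
  clear_value M
  set R : ℝ := 8 * lmax * (A + c2 * M) + 1 with hR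
  have hR0 : 0 < R := by
    have h1 : 0 ≤ c2 * M := mul_nonneg hc20 hM0.le
    have h2 : 0 ≤ A + c2 * M := by linarith
    have := mul_nonneg (by linarith : (0:ℝ) ≤ 8 * lmax) h2
    rw [hR]; linarith
  clear_value R
  set ε : ℝ := min (min 1 ((E q - 1)/(4*(A+1)))) (min (lmin * (E q - 1)/R) (1/(4*c2+4))) with hε
  have hε0 : 0 < ε := by
    apply lt_min (lt_min one_pos (div_pos hEq1 (by linarith)))
      (lt_min (div_pos (mul_pos hpos hEq1) hR0) (div_pos one_pos (by linarith)))
  have hε1 : ε ≤ 1 := le_trans (min_le_left _ _) (min_le_left _ _)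
  have hεa : ε ≤ (E q - 1)/(4*(A+1)) := le_trans (min_le_left _ _) (min_le_right _ _)
  have hεb : ε ≤ lmin * (E q - 1)/R := le_trans (min_le_right _ _) (min_le_left _ _)
  have hεc : ε ≤ 1/(4*c2+4) := le_trans (min_le_right _ _) (min_le_right _ _)
  clear_value ε
  have hεA : ε * A ≤ (E q - 1)/4 := by
    rw [le_div_iff₀ (by linarith)] at hεa
    linarith
  have hεR : ε * R ≤ lmin * (E q - 1) := by
    rw [le_div_iff₀ hR0] at hεb; linarith
  have hεc2 : c2 * ε ≤ 1/4 := by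
    rw [le_div_iff₀ (by linarith)] at hεc
    linarith
  set z : ℝ := 1/2 - c2 * ε with hz
  have hz0 : (1:ℝ)/4 ≤ z := by rw [hz]; linarith
  clear_value z
  set p2 : ℕ → ℝ := fun j => if j = q then 1/2 else if j = n+1 then z else ε with hp2
  have hp2pos : ∀ j, 0 < p2 j := by
    intro j; rw [hp2]; dsimp only; split_ifs <;> linarith
  have hp2q : p2 q = 1/2 := by rw [hp2]; simp
  have hp2C : p2 (n+1) = z := by rw [hp2]; simp [Ne.symm hqC]
  have hp2j : ∀ j, j ≠ q → j ≠ n+1 → p2 j = ε := by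
    intro j h1 h2; rw [hp2]; simp [h1, h2]
  clear_value p2
  have hsJ2 : ∑ j ∈ Finset.Icc 1 n, p2 j = 1/2 + c2 * ε := by
    rw [← Finset.add_sum_erase _ _ (Finset.mem_Icc.mpr ⟨hq1, hqn⟩), hp2q, ← hJq]
    have h1 : ∑ j ∈ Jq, p2 j = ∑ j ∈ Jq, ε := by
      apply Finset.sum_congr rfl
      intro j hj
      rw [hJq, Finset.mem_erase, Finset.mem_Icc] at hj
      exact hp2j j hj.1 (by omega)
    rw [h1, Finset.sum_const, nsmul_eq_mul, hcard]
  have hsJE : ∑ j ∈ Finset.Icc 1 n, E j * p2 j = E q / 2 + ε * A := by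
    rw [← Finset.add_sum_erase _ _ (Finset.mem_Icc.mpr ⟨hq1, hqn⟩), hp2q, ← hJq]
    have h1 : ∑ j ∈ Jq, E j * p2 j = ∑ j ∈ Jq, E j * ε := by
      apply Finset.sum_congr rfl
      intro j hj
      rw [hJq, Finset.mem_erase, Finset.mem_Icc] at hj
      rw [hp2j j hj.1 (by omega)]
    rw [h1, ← Finset.sum_mul, ← hA]; ring
  set Z : ℝ := E q / 2 + ε * A + z with hZ
  have hZ0 : 0 < Z := by
    have := hEpos q
    have := mul_nonneg hε0.le hA0
    rw [hZ]; linarith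
  clear_value Z
  set p1 : ℕ → ℝ := fun j => (if j = n+1 then 1 else E j) * p2 j / Z with hp1
  have hp1pos : ∀ j, 0 < p1 j := by
    intro j; rw [hp1]; dsimp only
    split_ifs
    · rw [one_mul]; exact div_pos (hp2pos j) hZ0
    · exact div_pos (mul_pos (hEpos j) (hp2pos j)) hZ0
  have hp1C : p1 (n+1) = z / Z := by rw [hp1]; simp [hp2C]
  have hp1j : ∀ j, j ≠ n+1 → p1 j = E j * p2 j / Z := by
    intro j h; rw [hp1]; simp [h]
  clear_value p1
  have hsplit : ∀ f : ℕ → ℝ, ∑ j ∈ Finset.Icc 1 (n+1), f j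
      = (∑ j ∈ Finset.Icc 1 n, f j) + f (n+1) :=
    fun f => Finset.sum_Icc_succ_top (by omega) f
  have hsum2 : ∑ j ∈ Finset.Icc 1 (n+1), p2 j = 1 := by
    rw [hsplit, hsJ2, hp2C, hz]; ring
  have hsum1 : ∑ j ∈ Finset.Icc 1 (n+1), p1 j = 1 := by
    rw [hsplit, hp1C]
    have h1 : ∑ j ∈ Finset.Icc 1 n, p1 j = ∑ j ∈ Finset.Icc 1 n, E j * p2 j / Z := by
      apply Finset.sum_congr rfl
      intro j hj
      rw [Finset.mem_Icc] at hj
      exact hp1j j (by omega)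
    rw [h1, ← Finset.sum_div, hsJE, ← add_div, ← hZ, div_self hZ0.ne']
  refine ⟨p1, p2, fun j _ => hp1pos j, fun j _ => hp2pos j, hsum1, hsum2, ?_, ?_⟩
  · intro j hj
    rw [Finset.mem_Icc] at hj
    have hjC : j ≠ n + 1 := by omega
    rw [hp1j j hjC, hp1C, hp2C]
    have hzne : z ≠ 0 := by linarith
    have h1 : E j * p2 j / Z * z / (z / Z * p2 j) = E j := by
      field_simp [hZ0.ne', hzne, (hp2pos j).ne']
    rw [h1]
    simp only [hE]
    exact (Real.log_exp _).symm
  · intro r hr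
    rw [Finset.mem_Icc] at hr
    obtain ⟨hr1, hrn⟩ := hr
    have hEZ : (E q - 1)/4 ≤ E q - Z := by
      have := mul_nonneg hc20 hε0.le
      rw [hZ, hz]; linarith [hεA]
    have hdq0 : (E q - 1)/(8*Z) ≤ p1 q - p2 q := by
      rw [hp1j q hqC, hp2q]
      have h3 : E q * (1/2) / Z - 1/2 = (E q - Z)/(2*Z) := by
        field_simp
      rw [h3, div_le_div_iff₀ (by linarith) (by linarith)]
      linarith [mul_le_mul_of_nonneg_right hEZ (by linarith : (0:ℝ) ≤ 8*Z)]
    have hdqnn : 0 ≤ p1 q - p2 q :=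
      le_trans (div_nonneg hEq1.le (by linarith)) hdq0
    have hdj : ∀ j ∈ Jq, |p1 j - p2 j| ≤ ε * (E j + Z)/Z := by
      intro j hj
      rw [hJq, Finset.mem_erase, Finset.mem_Icc] at hj
      have hjC : j ≠ n + 1 := by omega
      rw [hp1j j hjC, hp2j j hj.1 hjC]
      have ha : (0:ℝ) ≤ E j * ε / Z :=
        div_nonneg (mul_nonneg (hEpos j).le hε0.le) hZ0.le
      have hcalc : ε * (E j + Z)/Z = E j * ε / Z + ε := by
        field_simp
      rw [hcalc, abs_le]
      constructor <;> linarith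
    have hsumabs : ∑ j ∈ Jq, |p1 j - p2 j| ≤ ε * (A + c2*Z)/Z := by
      calc ∑ j ∈ Jq, |p1 j - p2 j| ≤ ∑ j ∈ Jq, ε * (E j + Z)/Z :=
            Finset.sum_le_sum hdj
        _ = ε * (A + c2*Z)/Z := by
            have h1 : ∀ j ∈ Jq, ε * (E j + Z)/Z = ε/Z * E j + ε := by
              intro j _
              field_simp
            rw [Finset.sum_congr rfl h1, Finset.sum_add_distrib, ← Finset.mul_sum, ← hA,
              Finset.sum_const, nsmul_eq_mul, hcard]
            field_simp
    set g : ℕ → ℝ := fun j => (if j ≤ r then lam r else lam j) * (p1 j - p2 j) with hg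
    have hIoc : ∀ m k : ℕ, Finset.Icc (m+1) k = Finset.Ioc m k := by
      intro m k; ext x; simp [Finset.mem_Icc, Finset.mem_Ioc]
    have hDelta : Delta (n+1) lam p1 p2 r = ∑ j ∈ Finset.Icc 1 n, g j := by
      unfold Delta
      simp only [Nat.add_sub_cancel]
      rw [Finset.mul_sum]
      rw [show Finset.Icc 1 r = Finset.Ioc 0 r from hIoc 0 r,
          show Finset.Icc (r+1) n = Finset.Ioc r n from hIoc r n,
          show Finset.Icc 1 n = Finset.Ioc 0 n from hIoc 0 n]
      rw [← Finset.sum_Ioc_consecutive _ (Nat.zero_le r) hrn]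
      congr 1
      · apply Finset.sum_congr rfl
        intro j hj
        rw [Finset.mem_Ioc] at hj
        rw [hg]; dsimp only; rw [if_pos hj.2]
      · apply Finset.sum_congr rfl
        intro j hj
        rw [Finset.mem_Ioc] at hj
        rw [hg]; dsimp only; rw [if_neg (by omega)]
    rw [hDelta, ← Finset.add_sum_erase _ _ (Finset.mem_Icc.mpr ⟨hq1, hqn⟩), ← hJq]
    have hcq : lmin ≤ (if q ≤ r then lam r else lam q) := by
      split_ifs with h
      · exact (hlam r hr1 hrn).2.1
      · exact (hlam q hq1 hqn).2.1
    have hgq : lmin * ((E q - 1)/(8*Z)) ≤ g q := by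
      rw [hg]; dsimp only
      calc lmin * ((E q - 1)/(8*Z)) ≤ lmin * (p1 q - p2 q) :=
            mul_le_mul_of_nonneg_left hdq0 hpos.le
        _ ≤ (if q ≤ r then lam r else lam q) * (p1 q - p2 q) :=
            mul_le_mul_of_nonneg_right hcq hdqnn
    have hgj : ∀ j ∈ Jq, -(lmax * |p1 j - p2 j|) ≤ g j := by
      intro j hj
      have hjmem := hj
      rw [hJq, Finset.mem_erase, Finset.mem_Icc] at hjmem
      have hcj : (if j ≤ r then lam r else lam j) ≤ lmax := by
        split_ifs with h
        · exact (hlam r hr1 hrn).2.2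
        · exact (hlam j hjmem.2.1 hjmem.2.2).2.2
      have hcj0 : 0 < (if j ≤ r then lam r else lam j) := by
        split_ifs with h
        · exact (hlam r hr1 hrn).1
        · exact (hlam j hjmem.2.1 hjmem.2.2).1
      have habs : |g j| ≤ lmax * |p1 j - p2 j| := by
        rw [hg]; dsimp only
        rw [abs_mul]
        apply mul_le_mul_of_nonneg_right _ (abs_nonneg _)
        rw [abs_of_pos hcj0]; exact hcj
      have := neg_abs_le (g j)
      linarith
    have hsumg : -(lmax * (ε*(A + c2*Z)/Z)) ≤ ∑ j ∈ Jq, g j := by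
      have h1 : ∑ j ∈ Jq, -(lmax * |p1 j - p2 j|) ≤ ∑ j ∈ Jq, g j :=
        Finset.sum_le_sum hgj
      have h2 : ∑ j ∈ Jq, -(lmax * |p1 j - p2 j|)
          = -(lmax * ∑ j ∈ Jq, |p1 j - p2 j|) := by
        rw [Finset.mul_sum, ← Finset.sum_neg_distrib]
      rw [h2] at h1
      have h3 : lmax * ∑ j ∈ Jq, |p1 j - p2 j| ≤ lmax * (ε*(A + c2*Z)/Z) :=
        mul_le_mul_of_nonneg_left hsumabs hlmax0.le
      linarith
    have hZM : Z ≤ M := by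
      have h1 : ε * A ≤ A := by
        linarith [mul_nonneg (by linarith : (0:ℝ) ≤ 1 - ε) hA0]
      have h2 : 0 ≤ c2 * ε := mul_nonneg hc20 hε0.le
      have := hEpos q
      rw [hZ, hM, hz]; linarith
    have hkey : lmax * (ε*(A + c2*Z)/Z) ≤ lmin * ((E q - 1)/(8*Z)) := by
      have h1 : A + c2*Z ≤ A + c2*M := by
        linarith [mul_le_mul_of_nonneg_left hZM hc20]
      have h2 : lmax * (ε * (A + c2*M)) * 8 ≤ lmin * (E q - 1) := by
        have hRR : ε * R ≤ lmin * (E q - 1) := hεR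
        rw [hR] at hRR
        linarith
      have h3 : lmax * (ε*(A + c2*Z)) ≤ lmin * ((E q - 1)/8) := by
        have h4 : lmax * (ε*(A + c2*Z)) ≤ lmax * (ε*(A + c2*M)) := by
          apply mul_le_mul_of_nonneg_left _ hlmax0.le
          exact mul_le_mul_of_nonneg_left h1 hε0.le
        linarith
      calc lmax * (ε*(A + c2*Z)/Z) = lmax * (ε*(A+c2*Z))/Z := by ring
        _ ≤ lmin * ((E q - 1)/8)/Z := by
            exact (div_le_div_iff_of_pos_right hZ0).mpr h3
        _ = lmin * ((E q - 1)/(8*Z)) := by ring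
    linarith
end

section
/- Let C ≥ 2 be an integer and let λ_1 > λ_2 > ... > λ_{C-1} > 0 be given constants. Let p_1 and p_2 be probability vectors on C categories with all entries strictly positive, and suppose the log odds ratios satisfy ν_j = log(p_{1j} p_{2C} / (p_{1C} p_{2j})) < 0 for every j = 1, ..., C-1. Then it is not the case that Δ_r(p_1, p_2) ≥ 0 for all r = 1, ..., C-1; that is, no pair of positive probability vectors whose log odds ratios are all strictly negative can satisfy the ICX inequalities. (Nonexistence part of Lemma 2.1.) -/
/-- Nonexistence part of Lemma 2.1: if all the log odds ratios are strictly
negative, the ICX inequalities `Δ_r ≥ 0` cannot all hold. -/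
theorem lemma21_nonexistence (C : ℕ) (hC : 2 ≤ C) (lam : ℕ → ℝ)
    (hanti : StrictAntiOn lam (Set.Icc 1 (C - 1))) (hpos : 0 < lam (C - 1))
    (p1 p2 : ℕ → ℝ)
    (hp1pos : ∀ j ∈ Finset.Icc 1 C, 0 < p1 j)
    (hp2pos : ∀ j ∈ Finset.Icc 1 C, 0 < p2 j)
    (hp1sum : ∑ j ∈ Finset.Icc 1 C, p1 j = 1)
    (hp2sum : ∑ j ∈ Finset.Icc 1 C, p2 j = 1)
    (hν : ∀ j ∈ Finset.Icc 1 (C - 1),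
      Real.log (p1 j * p2 C / (p1 C * p2 j)) < 0) :
    ¬ (∀ r ∈ Finset.Icc 1 (C - 1), 0 ≤ Delta C lam p1 p2 r) := by
  intro hΔ
  obtain ⟨D, rfl⟩ : ∃ D, C = D + 1 := ⟨C - 1, by omega⟩
  have hD : 1 ≤ D := by omega
  simp only [Nat.add_sub_cancel] at hΔ hν hpos
  have hpC1 : 0 < p1 (D + 1) := hp1pos _ (Finset.mem_Icc.mpr ⟨by omega, le_refl _⟩)
  have hpC2 : 0 < p2 (D + 1) := hp2pos _ (Finset.mem_Icc.mpr ⟨by omega, le_refl _⟩)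
  -- each log odds ratio negative gives a strict inequality
  have hlt : ∀ j ∈ Finset.Icc 1 D, p1 j * p2 (D + 1) < p1 (D + 1) * p2 j := by
    intro j hj
    have hj' := Finset.mem_Icc.mp hj
    have h1 : 0 < p1 j := hp1pos j (Finset.mem_Icc.mpr ⟨hj'.1, by omega⟩)
    have h2 : 0 < p2 j := hp2pos j (Finset.mem_Icc.mpr ⟨hj'.1, by omega⟩)
    have hlog := hν j hj
    have hb : 0 < p1 (D + 1) * p2 j := by positivity
    have hx : p1 j * p2 (D + 1) / (p1 (D + 1) * p2 j) < 1 := by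
      by_contra h
      push_neg at h
      exact absurd (Real.log_nonneg h) (not_le.mpr hlog)
    exact (div_lt_one hb).mp hx
  -- sum the strict inequalities
  have hsum : ∑ j ∈ Finset.Icc 1 D, p1 j * p2 (D + 1)
      < ∑ j ∈ Finset.Icc 1 D, p1 (D + 1) * p2 j :=
    Finset.sum_lt_sum_of_nonempty (Finset.nonempty_Icc.mpr hD) hlt
  have hs1 : ∑ j ∈ Finset.Icc 1 D, p1 j = 1 - p1 (D + 1) := by
    have := Finset.sum_Icc_succ_top (by omega : 1 ≤ D + 1) p1
    rw [this] at hp1sum; linarith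
  have hs2 : ∑ j ∈ Finset.Icc 1 D, p2 j = 1 - p2 (D + 1) := by
    have := Finset.sum_Icc_succ_top (by omega : 1 ≤ D + 1) p2
    rw [this] at hp2sum; linarith
  rw [← Finset.sum_mul, ← Finset.mul_sum, hs1, hs2] at hsum
  -- hence p2 C < p1 C
  have hkey : p2 (D + 1) < p1 (D + 1) := by nlinarith
  -- but Δ_{C-1} ≥ 0 gives the opposite
  have hΔD := hΔ D (Finset.mem_Icc.mpr ⟨hD, le_refl _⟩)
  have hempty : Finset.Icc (D + 1) (D + 1 - 1) = (∅ : Finset ℕ) :=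
    Finset.Icc_eq_empty (by omega)
  rw [Delta, hempty] at hΔD
  simp only [Finset.sum_empty, add_zero, Finset.sum_sub_distrib, hs1, hs2] at hΔD
  nlinarith
end
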